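/- Let F be a field of characteristic 2 and n ≥ 1. Let A be the group algebra of (ℤ/2ℤ)^n over F, i.e., the 2^n-dimensional commutative associative unital algebra with basis {e_x : x ∈ (ℤ/2ℤ)^n} and multiplication e_x e_y = e_{x+y}. Then A is both descendingly flexible and descendingly alternative, and l(A) = n = log₂(dim A). -/

import Mathlib

open Pointwise

namespace DescLength

variable (F : Type*) [Field F] {A : Type*} [NonUnitalNonAssocRing A] [Module F A]

/-- `Word S n a` means that `a` is a word of length `n` in letters from `S`,
i.e. a product of `n` elements of `S` with some arrangement of brackets. -/
inductive Word (S : Set A) : ℕ → A → Prop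
  | of {a : A} : a ∈ S → Word S 1 a
  | mul {m n : ℕ} {a b : A} : Word S m a → Word S n b → Word S (m + n) (a * b)

/-- The set of words of length exactly `n` in letters from `S`. -/
def words (S : Set A) (n : ℕ) : Set A := {a | Word S n a}

/-- `Lin_k(S)`, where the submodule `o` plays the role of `Lin_0(S)`:
`o = ⊥` if `A` is non-unital and `o = span F {e}` if `A` is unital with unity `e`. -/
def lin (o : Submodule F A) (S : Set A) (k : ℕ) : Submodule F A :=
  o ⊔ Submodule.span F (⋃ i ∈ Finset.Icc 1 k, words S i)

/-- `Lin_∞(S)`. -/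
def linInfty (o : Submodule F A) (S : Set A) : Submodule F A := ⨆ k, lin F o S k

/-- `S` is a generating set for `A`. -/
def Generates (o : Submodule F A) (S : Set A) : Prop := linInfty F o S = ⊤

/-- The length of the set `S`: `l(S) = min {k | Lin_k(S) = Lin_∞(S)}`. -/
noncomputable def len (o : Submodule F A) (S : Set A) : ℕ := sInf {k | lin F o S k = linInfty F o S}

/-- The length of the algebra `A`: `l(A) = max {l(S) | S generates A}`. -/
noncomputable def algLen (o : Submodule F A) : ℕ := sSup {n | ∃ S : Set A, Generates F o S ∧ len F o S = n}

/-- The sequence of differences `d_k(S)`. -/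
noncomputable def dseq (o : Submodule F A) (S : Set A) : ℕ → ℕ
  | 0 => Module.finrank F o
  | k + 1 => Module.finrank F (lin F o S (k + 1)) - Module.finrank F (lin F o S k)

/-- `o` is the span of the words of length zero: `⊥` if `A` has no two-sided unity,
and the span of the unity `e` otherwise. -/
def IsUnitalSpan (o : Submodule F A) : Prop :=
  ((¬ ∃ e : A, ∀ x : A, e * x = x ∧ x * e = x) ∧ o = ⊥) ∨
  (∃ e : A, (∀ x : A, e * x = x ∧ x * e = x) ∧ o = Submodule.span F {e})

def Ql (x y z : A) : Set A :=
  {x*(z*y), x*(y*z), y*(x*z), y*(z*x), x*y, y*x, x*z, z*x, y*z, z*y, x, y, z}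

def Qr (x y z : A) : Set A :=
  {(x*z)*y, (z*x)*y, (y*z)*x, (z*y)*x, x*y, y*x, x*z, z*x, y*z, z*y, x, y, z}

def Pset (x y z : A) : Set A := Ql x y z ∪ Qr x y z

/-- `A` is mixing: `(xy)z, z(xy) ∈ Lin_1(P(x,y,z))` for all `x, y, z`. -/
def IsMixing (o : Submodule F A) : Prop :=
  ∀ x y z : A, (x*y)*z ∈ o ⊔ Submodule.span F (Pset x y z) ∧
    z*(x*y) ∈ o ⊔ Submodule.span F (Pset x y z)

/-- `A` is left sliding: `(xy)z ∈ Lin_1(Q_l(x,y,z))` for all `x, y, z`. -/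
def IsLeftSliding (o : Submodule F A) : Prop :=
  ∀ x y z : A, (x*y)*z ∈ o ⊔ Submodule.span F (Ql x y z)

/-- `A` is right sliding: `z(xy) ∈ Lin_1(Q_r(x,y,z))` for all `x, y, z`. -/
def IsRightSliding (o : Submodule F A) : Prop :=
  ∀ x y z : A, z*(x*y) ∈ o ⊔ Submodule.span F (Qr x y z)

/-- `Lin_1(a, b, aa, ab, ba)`. -/
def lin1five (o : Submodule F A) (a b : A) : Submodule F A :=
  o ⊔ Submodule.span F {a, b, a*a, a*b, b*a}

/-- `Lin'_2(a, b, c)`. -/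
def lin2' (o : Submodule F A) (a b c : A) : Submodule F A :=
  o ⊔ Submodule.span F {a, b, c, a*b, b*a, b*c, c*b, a*c, c*a}

/-- `A` is descendingly flexible. -/
def IsDescFlexible (o : Submodule F A) : Prop :=
  ∀ a b c : A, (a*b)*a ∈ lin1five F o a b ∧ a*(b*a) ∈ lin1five F o a b ∧
    (a*b)*c + (c*b)*a ∈ lin2' F o a b c ∧ a*(b*c) + c*(b*a) ∈ lin2' F o a b c

/-- `A` is descendingly alternative. -/
def IsDescAlternative (o : Submodule F A) : Prop :=
  ∀ a b c : A, (b*a)*a ∈ lin1five F o a b ∧ a*(a*b) ∈ lin1five F o a b ∧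
    (a*b)*c + (a*c)*b ∈ lin2' F o a b c ∧ a*(b*c) + b*(a*c) ∈ lin2' F o a b c

/-- `S^{(m)}`: the words obtained from a letter of `S` by repeatedly multiplying by a single
letter of `S`, on the left or on the right. -/
def chainWords (S : Set A) : ℕ → Set A
  | 0 => ∅
  | 1 => S
  | n + 2 => chainWords S (n + 1) * S ∪ S * chainWords S (n + 1)


section Statement11Aux

open AddMonoidAlgebra

set_option linter.unusedSectionVars false

variable {F : Type*} [Field F] [CharP F 2] {n : ℕ}

private lemma kaddself (K : Type*) [Field K] [CharP K 2] {M : Type*} [AddCommMonoid M]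
    [Module K M] (x : M) : x + x = 0 := by
  have h2 : (2 : K) = 0 := by exact_mod_cast CharP.cast_eq_zero K 2
  rw [← two_smul K x, h2, zero_smul]

private lemma gaddself (x : Fin n → ZMod 2) : x + x = 0 := by
  funext i
  exact (by decide : ∀ a : ZMod 2, a + a = 0) (x i)

private lemma gneg (x : Fin n → ZMod 2) : -x = x := by
  funext i
  exact (by decide : ∀ a : ZMod 2, -a = a) (x i)

private lemma prod_single' {ι : Type*} (V : Finset ι) (v : ι → (Fin n → ZMod 2)) :
    (∏ i ∈ V, (single (v i) (1:F) : AddMonoidAlgebra F (Fin n → ZMod 2))) =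
      single (∑ i ∈ V, v i) 1 := by
  classical
  induction V using Finset.induction_on with
  | empty => simp [AddMonoidAlgebra.one_def]
  | insert _ _ h ih =>
    rw [Finset.prod_insert h, ih, Finset.sum_insert h, AddMonoidAlgebra.single_mul_single,
      one_mul]

private lemma exists_zero_sum {k : ℕ} (hk : n < k) (v : Fin k → (Fin n → ZMod 2)) :
    ∃ T : Finset (Fin k), T.Nonempty ∧ ∑ i ∈ T, v i = 0 := by
  classical
  have hnotli : ¬ LinearIndependent (ZMod 2) v := by
    intro h
    have := h.fintype_card_le_finrank
    rw [Module.finrank_pi] at this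
    simp only [Fintype.card_fin] at this
    omega
  obtain ⟨g, hg, i0, hi0⟩ := Fintype.not_linearIndependent_iff.1 hnotli
  refine ⟨Finset.univ.filter (fun i => g i ≠ 0), ⟨i0, by simp [hi0]⟩, ?_⟩
  have h1 : ∀ i ∈ Finset.univ.filter (fun i => g i ≠ 0), v i = g i • v i := by
    intro i hi
    simp only [Finset.mem_filter] at hi
    have : g i = 1 := (by decide : ∀ a : ZMod 2, a ≠ 0 → a = 1) _ hi.2
    rw [this, one_smul]
  rw [Finset.sum_congr rfl h1,
    Finset.sum_filter_of_ne (by intro i _ h h0; exact h (by rw [h0, zero_smul]))]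
  exact hg

private lemma prod_single_add_one_eq_zero {k : ℕ} (hk : n < k) (v : Fin k → (Fin n → ZMod 2)) :
    (∏ i, ((single (v i) (1:F) : AddMonoidAlgebra F (Fin n → ZMod 2)) + 1)) = 0 := by
  classical
  obtain ⟨T, hTne, hTsum⟩ := exists_zero_sum hk v
  have hTzero : (∏ i ∈ T, ((single (v i) (1:F) : AddMonoidAlgebra F (Fin n → ZMod 2)) + 1))
      = 0 := by
    rw [Finset.prod_add]
    have hterm : ∀ U ∈ T.powerset,
        (∏ i ∈ U, (single (v i) (1:F) : AddMonoidAlgebra F (Fin n → ZMod 2))) *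
          ∏ _i ∈ T \ U, (1 : AddMonoidAlgebra F (Fin n → ZMod 2))
        = single (∑ i ∈ U, v i) (1:F) := by
      intro U _
      rw [Finset.prod_const_one, mul_one, prod_single']
    rw [Finset.sum_congr rfl hterm]
    refine Finset.sum_involution (fun U _ => T \ U) ?_ ?_ ?_ ?_
    · intro U hU
      have hUT : U ⊆ T := Finset.mem_powerset.1 hU
      have hs : ∑ i ∈ T \ U, v i = ∑ i ∈ U, v i := by
        rw [Finset.sum_sdiff_eq_sub hUT, hTsum, zero_sub, gneg]
      rw [hs]
      exact kaddself F _
    · intro U hU _ hEq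
      have hEq' : T \ U = U := hEq
      have hd : Disjoint (T \ U) U := Finset.sdiff_disjoint
      rw [hEq'] at hd
      have hUe : U = ∅ := by simpa using disjoint_self.mp hd
      rw [hUe, Finset.sdiff_empty] at hEq'
      exact hTne.ne_empty hEq'
    · intro U _
      exact Finset.mem_powerset.2 Finset.sdiff_subset
    · intro U hU
      exact sdiff_sdiff_eq_self (Finset.mem_powerset.1 hU)
  rw [← Finset.prod_sdiff (Finset.subset_univ T), hTzero, mul_zero]

/-- The generators `e_x + 1` of the augmentation ideal. -/
private def Tset (F : Type*) [Field F] (n : ℕ) : Set (AddMonoidAlgebra F (Fin n → ZMod 2)) :=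
  Set.range fun x : Fin n → ZMod 2 => single x (1:F) + 1

private lemma exists_shift (b : AddMonoidAlgebra F (Fin n → ZMod 2)) :
    ∃ c : F, b + c • 1 ∈ Submodule.span F (Tset F n) := by
  classical
  refine ⟨∑ x ∈ b.coeff.support, b.coeff x, ?_⟩
  have hb : b + (∑ x ∈ b.coeff.support, b.coeff x) • (1 : AddMonoidAlgebra F (Fin n → ZMod 2))
      = ∑ x ∈ b.coeff.support, b.coeff x • ((single x (1:F) : AddMonoidAlgebra F (Fin n → ZMod 2)) + 1) := by
    have h1 : ∀ x ∈ b.coeff.support,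
        b.coeff x • ((single x (1:F) : AddMonoidAlgebra F (Fin n → ZMod 2)) + 1)
          = single x (b.coeff x) + b.coeff x • 1 := by
      intro x _
      rw [smul_add, AddMonoidAlgebra.smul_single', mul_one]
    rw [Finset.sum_congr rfl h1, Finset.sum_add_distrib, ← Finset.sum_smul]
    congr 1
    conv_lhs => rw [← AddMonoidAlgebra.sum_coeff_single b, Finsupp.sum]
  rw [hb]
  refine Submodule.sum_mem _ fun x _ => Submodule.smul_mem _ _ (Submodule.subset_span ⟨x, rfl⟩)

private lemma prod_mem_span_gen (l : List (AddMonoidAlgebra F (Fin n → ZMod 2)))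
    (hl : ∀ y ∈ l, y ∈ Submodule.span F (Tset F n)) :
    l.prod ∈ Submodule.span F {z : AddMonoidAlgebra F (Fin n → ZMod 2) |
      ∃ g : List (Fin n → ZMod 2), g.length = l.length ∧
        z = (g.map fun x => (single x (1:F) : AddMonoidAlgebra F (Fin n → ZMod 2)) + 1).prod} := by
  induction l with
  | nil => exact Submodule.subset_span ⟨[], rfl, by simp⟩
  | cons b l ihl =>
    have hb := hl b List.mem_cons_self
    have hl' := fun y hy => hl y (List.mem_cons_of_mem _ hy)
    rw [List.prod_cons]
    have h2 := Submodule.mul_mem_mul hb (ihl hl')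
    rw [Submodule.span_mul_span] at h2
    refine Submodule.span_le.mpr ?_ h2
    rintro z ⟨t, ht, w, hw, rfl⟩
    obtain ⟨x, rfl⟩ := ht
    obtain ⟨g, hg, rfl⟩ := hw
    exact Submodule.subset_span ⟨x :: g, by simp [hg], by simp⟩

private lemma spanT_prod_zero (l : List (AddMonoidAlgebra F (Fin n → ZMod 2)))
    (hl : ∀ y ∈ l, y ∈ Submodule.span F (Tset F n)) (h : n < l.length) : l.prod = 0 := by
  have hmem := prod_mem_span_gen l hl
  have hzero : {z : AddMonoidAlgebra F (Fin n → ZMod 2) |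
      ∃ g : List (Fin n → ZMod 2), g.length = l.length ∧
        z = (g.map fun x => (single x (1:F) : AddMonoidAlgebra F (Fin n → ZMod 2)) + 1).prod}
      ⊆ {0} := by
    rintro z ⟨g, hg, rfl⟩
    have h1 : (g.map fun x =>
        (single x (1:F) : AddMonoidAlgebra F (Fin n → ZMod 2)) + 1).prod
        = ∏ i, ((single (g.get i) (1:F) : AddMonoidAlgebra F (Fin n → ZMod 2)) + 1) := by
      conv_lhs => rw [← List.ofFn_get g, List.map_ofFn]
      rw [List.prod_ofFn]
      rfl
    have h2 : n < g.length := by omega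
    rw [Set.mem_singleton_iff, h1]
    exact prod_single_add_one_eq_zero h2 _
  have := Submodule.span_mono hzero hmem
  rw [Submodule.span_zero_singleton] at this
  rwa [Submodule.mem_bot] at this

private lemma prod_eq_sum_expansion {ι : Type*} [DecidableEq ι] (s : Finset ι)
    (w : ι → AddMonoidAlgebra F (Fin n → ZMod 2)) (c : ι → F) :
    ∏ i ∈ s, (w i + c i • 1) =
      ∑ V ∈ s.powerset, (∏ i ∈ s \ V, c i) • ∏ i ∈ V, w i := by
  rw [Finset.prod_add]
  refine Finset.sum_congr rfl fun V _ => ?_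
  have h1 : (∏ i ∈ s \ V, (c i • (1 : AddMonoidAlgebra F (Fin n → ZMod 2))))
      = (∏ i ∈ s \ V, c i) • 1 := by
    simp only [Algebra.smul_def, mul_one]
    exact (map_prod (algebraMap F (AddMonoidAlgebra F (Fin n → ZMod 2))) _ _).symm
  rw [h1, mul_smul_comm, mul_one]

private lemma word_exists_list {B : Type*} [CommRing B] {S : Set B} {k : ℕ} {a : B}
    (h : Word S k a) : ∃ l : List B, l.length = k ∧ (∀ x ∈ l, x ∈ S) ∧ a = l.prod := by
  induction h with
  | of ha => exact ⟨[_], rfl, by simpa using ha, by simp⟩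
  | mul h1 h2 ih1 ih2 =>
    obtain ⟨l1, hl1, hm1, hp1⟩ := ih1
    obtain ⟨l2, hl2, hm2, hp2⟩ := ih2
    refine ⟨l1 ++ l2, by simp [hl1, hl2], ?_, by rw [List.prod_append, hp1, hp2]⟩
    intro x hx
    rcases List.mem_append.1 hx with h | h
    exacts [hm1 x h, hm2 x h]

private lemma word_pos {B : Type*} [NonUnitalNonAssocRing B] {S : Set B} {k : ℕ} {a : B}
    (h : Word S k a) : 1 ≤ k := by
  induction h with
  | of _ => exact le_refl 1
  | mul h1 h2 ih1 ih2 => omega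

private lemma finset_prod_word {B : Type*} [CommRing B] {S : Set B} {ι : Type*}
    (a : ι → B) (ha : ∀ i, a i ∈ S) (V : Finset ι) (hV : V.Nonempty) :
    Word S V.card (∏ i ∈ V, a i) := by
  classical
  induction V using Finset.cons_induction with
  | empty => exact absurd hV (by simp)
  | cons i V hi ih =>
    rw [Finset.prod_cons]
    rcases V.eq_empty_or_nonempty with rfl | hne
    · have h1 : a i * ∏ j ∈ (∅ : Finset ι), a j = a i := by simp
      rw [h1]
      have h2 : (Finset.cons i ∅ hi).card = 1 := by simp
      rw [h2]
      exact Word.of (ha i)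
    · have hw := Word.mul (Word.of (ha i)) (ih hne)
      rwa [Finset.card_cons, Nat.add_comm]

private lemma words_sub_lin (S : Set (AddMonoidAlgebra F (Fin n → ZMod 2))) (k : ℕ) :
    ∀ a ∈ words S k,
      a ∈ lin F (Submodule.span F {(1 : AddMonoidAlgebra F (Fin n → ZMod 2))}) S n := by
  classical
  induction k using Nat.strong_induction_on with
  | _ k ih =>
  intro a ha
  have hW : Word S k a := ha
  by_cases hkn : k ≤ n
  · have h1 : 1 ≤ k := word_pos hW
    refine Submodule.mem_sup_right (Submodule.subset_span ?_)
    exact Set.mem_iUnion₂.2 ⟨k, Finset.mem_Icc.2 ⟨h1, hkn⟩, ha⟩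
  · push_neg at hkn
    obtain ⟨l, hlen, hmem, rfl⟩ := word_exists_list hW
    subst hlen
    have hprodl : (∏ i, l.get i) = l.prod := by
      conv_rhs => rw [← List.ofFn_get l]
      rw [List.prod_ofFn]
    choose c hc using fun i : Fin l.length => exists_shift (F := F) (n := n) (l.get i)
    have hmzero : (∏ i, (l.get i + c i • 1)) = 0 := by
      have h1 : (List.ofFn fun i => l.get i + c i • 1).prod = 0 := by
        refine spanT_prod_zero _ ?_ ?_
        · intro y hy
          rw [List.mem_ofFn] at hy
          obtain ⟨i, rfl⟩ := hy
          exact hc i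
        · rw [List.length_ofFn]
          omega
      rwa [List.prod_ofFn] at h1
    have hgm : ∀ i : Fin l.length, l.get i = (l.get i + c i • 1) + c i • 1 := by
      intro i
      rw [add_assoc, kaddself F (c i • 1), add_zero]
    have key : l.prod = ∑ V ∈ (Finset.univ : Finset (Fin l.length)).powerset,
        (∏ i ∈ Finset.univ \ V, c i) • ∏ i ∈ V, (l.get i + c i • 1) := by
      rw [← hprodl, Finset.prod_congr rfl (fun i _ => hgm i),
        prod_eq_sum_expansion Finset.univ (fun i => l.get i + c i • 1) c]
    rw [key]
    refine Submodule.sum_mem _ ?_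
    intro V _
    refine Submodule.smul_mem _ _ ?_
    by_cases hVuniv : V = Finset.univ
    · subst hVuniv
      rw [hmzero]
      exact Submodule.zero_mem _
    · have hcard : V.card < l.length := by
        have := Finset.card_lt_iff_ne_univ V |>.2 hVuniv
        simpa [Fintype.card_fin] using this
      rw [prod_eq_sum_expansion V (fun i => l.get i) c]
      refine Submodule.sum_mem _ ?_
      intro W hW
      refine Submodule.smul_mem _ _ ?_
      rcases W.eq_empty_or_nonempty with rfl | hWne
      · have h1 : (∏ i ∈ (∅ : Finset (Fin l.length)), l.get i) = 1 := by simp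
        rw [h1]
        exact Submodule.mem_sup_left (Submodule.subset_span rfl)
      · have hword : Word S W.card (∏ i ∈ W, l.get i) :=
          finset_prod_word (fun i : Fin l.length => l.get i)
            (fun i => hmem _ (l.get_mem i)) W hWne
        exact ih W.card
          (lt_of_le_of_lt (Finset.card_le_card (Finset.mem_powerset.1 hW)) hcard) _ hword

private lemma linInfty_eq_lin_n (S : Set (AddMonoidAlgebra F (Fin n → ZMod 2))) :
    linInfty F (Submodule.span F {(1 : AddMonoidAlgebra F (Fin n → ZMod 2))}) S
      = lin F (Submodule.span F {(1 : AddMonoidAlgebra F (Fin n → ZMod 2))}) S n := by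
  apply le_antisymm
  · apply iSup_le
    intro k
    apply sup_le
    · exact le_sup_left
    · rw [Submodule.span_le]
      rintro a ha
      rw [Set.mem_iUnion₂] at ha
      obtain ⟨i, _, hai⟩ := ha
      exact words_sub_lin S i a hai
  · exact le_iSup
      (fun k => lin F (Submodule.span F {(1 : AddMonoidAlgebra F (Fin n → ZMod 2))}) S k) n

/-- The generating set `{e_{δ_i}}`. -/
private def Szero (F : Type*) [Field F] (n : ℕ) : Set (AddMonoidAlgebra F (Fin n → ZMod 2)) :=
  Set.range fun i : Fin n => single (Pi.single i (1 : ZMod 2)) (1:F)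

private lemma basis_mem_lin (x : Fin n → ZMod 2) :
    (single x (1:F) : AddMonoidAlgebra F (Fin n → ZMod 2)) ∈
      lin F (Submodule.span F {(1 : AddMonoidAlgebra F (Fin n → ZMod 2))}) (Szero F n) n := by
  classical
  set V : Finset (Fin n) := Finset.univ.filter (fun i => x i = 1) with hV
  have hx : x = ∑ i ∈ V, Pi.single i (1 : ZMod 2) := by
    funext j
    rw [Finset.sum_apply]
    have h1 : ∀ i ∈ V, (Pi.single i (1 : ZMod 2) : Fin n → ZMod 2) j
        = if j = i then 1 else 0 := by
      intro i _
      rw [Pi.single_apply]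
    rw [Finset.sum_congr rfl h1, Finset.sum_ite_eq V j (fun _ => (1 : ZMod 2))]
    by_cases hj : x j = 1
    · rw [if_pos (by simp [hV, hj]), hj]
    · rw [if_neg (by simp [hV, hj]),
        (by decide : ∀ a : ZMod 2, a ≠ 1 → a = 0) _ hj]
  rcases V.eq_empty_or_nonempty with hVe | hVne
  · have hx0 : x = 0 := by rw [hx, hVe, Finset.sum_empty]
    rw [hx0, ← AddMonoidAlgebra.one_def]
    exact Submodule.mem_sup_left (Submodule.subset_span rfl)
  · have hword : Word (Szero F n) V.card
        (∏ i ∈ V, (single (Pi.single i (1 : ZMod 2)) (1:F) : AddMonoidAlgebra F (Fin n → ZMod 2))) :=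
      finset_prod_word (fun i : Fin n => (single (Pi.single i (1 : ZMod 2)) (1:F) :
        AddMonoidAlgebra F (Fin n → ZMod 2)))
        (fun i => show (single (Pi.single i (1 : ZMod 2)) (1:F) :
          AddMonoidAlgebra F (Fin n → ZMod 2)) ∈ Szero F n from ⟨i, rfl⟩) V hVne
    have hprod : (∏ i ∈ V, (single (Pi.single i (1 : ZMod 2)) (1:F) :
        AddMonoidAlgebra F (Fin n → ZMod 2))) = single x 1 := by
      rw [prod_single', ← hx]
    rw [← hprod]
    refine Submodule.mem_sup_right (Submodule.subset_span ?_)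
    refine Set.mem_iUnion₂.2 ⟨V.card, Finset.mem_Icc.2 ⟨hVne.card_pos, ?_⟩, hword⟩
    calc V.card ≤ (Finset.univ : Finset (Fin n)).card := Finset.card_le_univ V
    _ = n := by simp

private lemma lin_top :
    lin F (Submodule.span F {(1 : AddMonoidAlgebra F (Fin n → ZMod 2))}) (Szero F n) n = ⊤ := by
  classical
  rw [eq_top_iff]
  intro a _
  have h1 : a = ∑ x ∈ a.coeff.support,
      a.coeff x • (single x (1:F) : AddMonoidAlgebra F (Fin n → ZMod 2)) := by
    conv_lhs => rw [← AddMonoidAlgebra.sum_coeff_single a, Finsupp.sum]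
    refine Finset.sum_congr rfl fun x _ => ?_
    rw [AddMonoidAlgebra.smul_single', mul_one]
  rw [h1]
  exact Submodule.sum_mem _ fun x _ => Submodule.smul_mem _ _ (basis_mem_lin x)

private lemma gen_Szero :
    Generates F (Submodule.span F {(1 : AddMonoidAlgebra F (Fin n → ZMod 2))}) (Szero F n) := by
  unfold Generates
  rw [linInfty_eq_lin_n, lin_top]

private lemma word_small {k : ℕ} (hkn : k < n) {a : AddMonoidAlgebra F (Fin n → ZMod 2)}
    (ha : Word (Szero F n) k a) :
    ∃ x : Fin n → ZMod 2, x ≠ (fun _ => 1) ∧ a = single x 1 := by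
  classical
  obtain ⟨l, hlen, hmem, rfl⟩ := word_exists_list ha
  have hch : ∀ i : Fin l.length, ∃ j : Fin n,
      l.get i = single (Pi.single j (1 : ZMod 2)) (1:F) := by
    intro i
    obtain ⟨j, hj⟩ := hmem _ (l.get_mem i)
    exact ⟨j, hj.symm⟩
  choose v hv using hch
  have hprod : l.prod
      = single (∑ i, (Pi.single (v i) (1 : ZMod 2) : Fin n → ZMod 2)) (1:F) := by
    conv_lhs => rw [← List.ofFn_get l]
    rw [List.prod_ofFn, Finset.prod_congr rfl (fun i _ => hv i), prod_single']
  refine ⟨_, ?_, hprod⟩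
  intro hcontra
  have hlt : l.length < n := by omega
  have hns : ∃ j : Fin n, ∀ i, v i ≠ j := by
    by_contra h
    push_neg at h
    have hsurj : Function.Surjective v := fun j => (h j).imp fun i hi => hi
    have := Fintype.card_le_of_surjective v hsurj
    simp only [Fintype.card_fin] at this
    omega
  obtain ⟨j, hj⟩ := hns
  have hz : (∑ i, (Pi.single (v i) (1 : ZMod 2) : Fin n → ZMod 2)) j = 0 := by
    rw [Finset.sum_apply]
    refine Finset.sum_eq_zero fun i _ => ?_
    rw [Pi.single_apply, if_neg (fun hji => hj i hji.symm)]
  rw [hcontra] at hz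
  exact one_ne_zero hz

private lemma lin_ne_top (hn : 1 ≤ n) {k : ℕ} (hk : k < n) :
    lin F (Submodule.span F {(1 : AddMonoidAlgebra F (Fin n → ZMod 2))}) (Szero F n) k ≠ ⊤ := by
  classical
  intro htop
  set one1 : Fin n → ZMod 2 := fun _ => 1 with hone1
  have hone1ne : one1 ≠ 0 := by
    intro h
    have := congrFun h ⟨0, hn⟩
    exact one_ne_zero this
  have φdef : ∃ φ : AddMonoidAlgebra F (Fin n → ZMod 2) →ₗ[F] F,
      ∀ b : AddMonoidAlgebra F (Fin n → ZMod 2), φ b = b.coeff one1 :=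
    ⟨(Finsupp.lapply one1).comp (AddMonoidAlgebra.coeffLinearEquiv F).toLinearMap, fun _ => rfl⟩
  obtain ⟨φ, hφ⟩ := φdef
  have hker : lin F (Submodule.span F {(1 : AddMonoidAlgebra F (Fin n → ZMod 2))})
      (Szero F n) k ≤ LinearMap.ker φ := by
    apply sup_le
    · rw [Submodule.span_le]
      rintro b rfl
      rw [SetLike.mem_coe, LinearMap.mem_ker, hφ, AddMonoidAlgebra.one_def]
      exact Finsupp.single_eq_of_ne' (fun h => hone1ne h.symm)
    · rw [Submodule.span_le]
      rintro b hb
      rw [Set.mem_iUnion₂] at hb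
      obtain ⟨i, hi, hbi⟩ := hb
      rw [Finset.mem_Icc] at hi
      obtain ⟨x, hx, rfl⟩ := word_small (lt_of_le_of_lt hi.2 hk) hbi
      rw [SetLike.mem_coe, LinearMap.mem_ker, hφ]
      exact Finsupp.single_eq_of_ne' (fun h => hx h)
  have hmem : (single one1 (1:F) : AddMonoidAlgebra F (Fin n → ZMod 2)) ∈
      lin F (Submodule.span F {(1 : AddMonoidAlgebra F (Fin n → ZMod 2))}) (Szero F n) k := by
    rw [htop]; exact Submodule.mem_top
  have := hker hmem
  rw [LinearMap.mem_ker, hφ] at this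
  rw [AddMonoidAlgebra.coeff_single, Finsupp.single_eq_same] at this
  exact one_ne_zero this

private lemma len_le (S : Set (AddMonoidAlgebra F (Fin n → ZMod 2))) :
    len F (Submodule.span F {(1 : AddMonoidAlgebra F (Fin n → ZMod 2))}) S ≤ n :=
  Nat.sInf_le (linInfty_eq_lin_n S).symm

private lemma len_Szero (hn : 1 ≤ n) :
    len F (Submodule.span F {(1 : AddMonoidAlgebra F (Fin n → ZMod 2))}) (Szero F n) = n := by
  have hmemn : n ∈ {k | lin F (Submodule.span F {(1 : AddMonoidAlgebra F (Fin n → ZMod 2))})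
      (Szero F n) k
      = linInfty F (Submodule.span F {(1 : AddMonoidAlgebra F (Fin n → ZMod 2))}) (Szero F n)} :=
    (linInfty_eq_lin_n (Szero F n)).symm
  apply le_antisymm
  · exact Nat.sInf_le hmemn
  · refine le_csInf ⟨n, hmemn⟩ ?_
    intro k hk
    by_contra h
    push_neg at h
    refine lin_ne_top (F := F) hn h ?_
    rw [Set.mem_setOf_eq] at hk
    rw [hk, linInfty_eq_lin_n (Szero F n), lin_top]

private lemma algLen_eq (hn : 1 ≤ n) :
    algLen F (Submodule.span F {(1 : AddMonoidAlgebra F (Fin n → ZMod 2))}) = n := by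
  unfold algLen
  have hmem : n ∈ {m | ∃ S : Set (AddMonoidAlgebra F (Fin n → ZMod 2)),
      Generates F (Submodule.span F {(1 : AddMonoidAlgebra F (Fin n → ZMod 2))}) S ∧
      len F (Submodule.span F {(1 : AddMonoidAlgebra F (Fin n → ZMod 2))}) S = m} :=
    ⟨Szero F n, gen_Szero, len_Szero hn⟩
  have hub : ∀ m ∈ {m | ∃ S : Set (AddMonoidAlgebra F (Fin n → ZMod 2)),
      Generates F (Submodule.span F {(1 : AddMonoidAlgebra F (Fin n → ZMod 2))}) S ∧
      len F (Submodule.span F {(1 : AddMonoidAlgebra F (Fin n → ZMod 2))}) S = m}, m ≤ n := by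
    rintro m ⟨S, _, rfl⟩
    exact len_le S
  exact le_antisymm (csSup_le ⟨n, hmem⟩ hub) (le_csSup ⟨n, hub⟩ hmem)

private lemma single_sum' {ι : Type*} (s : Finset ι) (g : ι → F) (y : Fin n → ZMod 2) :
    (∑ i ∈ s, (single y (g i) : AddMonoidAlgebra F (Fin n → ZMod 2)))
      = single y (∑ i ∈ s, g i) := by
  classical
  induction s using Finset.induction_on with
  | empty => simp
  | insert _ _ h ih =>
    rw [Finset.sum_insert h, Finset.sum_insert h, ih]
    exact (AddMonoidAlgebra.single_add y _ _).symm

private lemma sq_scalar (a : AddMonoidAlgebra F (Fin n → ZMod 2)) :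
    ∃ c : F, a * a = c • 1 := by
  classical
  haveI : Nontrivial (AddMonoidAlgebra F (Fin n → ZMod 2)) :=
    inferInstance
  haveI hA2 : CharP (AddMonoidAlgebra F (Fin n → ZMod 2)) 2 :=
    charP_of_injective_algebraMap' F 2
  haveI : ExpChar (AddMonoidAlgebra F (Fin n → ZMod 2)) 2 := ExpChar.prime Nat.prime_two
  refine ⟨∑ x ∈ a.coeff.support, a.coeff x * a.coeff x, ?_⟩
  have hf : ∀ x : Fin n → ZMod 2,
      (single x (a.coeff x) : AddMonoidAlgebra F (Fin n → ZMod 2)) ^ 2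
        = single (0 : Fin n → ZMod 2) (a.coeff x * a.coeff x) := by
    intro x
    rw [sq, AddMonoidAlgebra.single_mul_single, gaddself]
  have hsum : a = ∑ x ∈ a.coeff.support,
      (single x (a.coeff x) : AddMonoidAlgebra F (Fin n → ZMod 2)) :=
    (AddMonoidAlgebra.sum_coeff_single a).symm
  calc a * a
      = (∑ x ∈ a.coeff.support,
          (single x (a.coeff x) : AddMonoidAlgebra F (Fin n → ZMod 2))) ^ 2 := by
        rw [← hsum]; exact (sq a).symm
    _ = ∑ x ∈ a.coeff.support,
          (single x (a.coeff x) : AddMonoidAlgebra F (Fin n → ZMod 2)) ^ 2 :=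
        sum_pow_char 2 _ _
    _ = ∑ x ∈ a.coeff.support,
          (single (0 : Fin n → ZMod 2) (a.coeff x * a.coeff x) : AddMonoidAlgebra F (Fin n → ZMod 2)) :=
        Finset.sum_congr rfl fun x _ => hf x
    _ = single (0 : Fin n → ZMod 2) (∑ x ∈ a.coeff.support, a.coeff x * a.coeff x) :=
        single_sum' _ _ _
    _ = (∑ x ∈ a.coeff.support, a.coeff x * a.coeff x) • 1 := by
        rw [AddMonoidAlgebra.one_def, AddMonoidAlgebra.smul_single', mul_one]

private lemma desc_flex :
    IsDescFlexible F (Submodule.span F {(1 : AddMonoidAlgebra F (Fin n → ZMod 2))}) := by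
  intro a b c
  obtain ⟨γ, hγ⟩ := sq_scalar a
  have hself := kaddself F (M := AddMonoidAlgebra F (Fin n → ZMod 2))
  refine ⟨?_, ?_, ?_, ?_⟩
  · have h : (a*b)*a = γ • b := by
      have h1 : (a*b)*a = (a*a)*b := by ring
      rw [h1, hγ, smul_mul_assoc, one_mul]
    rw [h]
    exact Submodule.mem_sup_right (Submodule.smul_mem _ _ (Submodule.subset_span (by simp)))
  · have h : a*(b*a) = γ • b := by
      have h1 : a*(b*a) = (a*a)*b := by ring
      rw [h1, hγ, smul_mul_assoc, one_mul]
    rw [h]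
    exact Submodule.mem_sup_right (Submodule.smul_mem _ _ (Submodule.subset_span (by simp)))
  · have h : (a*b)*c + (c*b)*a = 0 := by
      have h1 : (c*b)*a = (a*b)*c := by ring
      rw [h1]; exact hself _
    rw [h]; exact Submodule.zero_mem _
  · have h : a*(b*c) + c*(b*a) = 0 := by
      have h1 : c*(b*a) = a*(b*c) := by ring
      rw [h1]; exact hself _
    rw [h]; exact Submodule.zero_mem _

private lemma desc_alt :
    IsDescAlternative F (Submodule.span F {(1 : AddMonoidAlgebra F (Fin n → ZMod 2))}) := by
  intro a b c
  obtain ⟨γ, hγ⟩ := sq_scalar a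
  have hself := kaddself F (M := AddMonoidAlgebra F (Fin n → ZMod 2))
  refine ⟨?_, ?_, ?_, ?_⟩
  · have h : (b*a)*a = γ • b := by
      have h1 : (b*a)*a = (a*a)*b := by ring
      rw [h1, hγ, smul_mul_assoc, one_mul]
    rw [h]
    exact Submodule.mem_sup_right (Submodule.smul_mem _ _ (Submodule.subset_span (by simp)))
  · have h : a*(a*b) = γ • b := by
      have h1 : a*(a*b) = (a*a)*b := by ring
      rw [h1, hγ, smul_mul_assoc, one_mul]
    rw [h]
    exact Submodule.mem_sup_right (Submodule.smul_mem _ _ (Submodule.subset_span (by simp)))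
  · have h : (a*b)*c + (a*c)*b = 0 := by
      have h1 : (a*c)*b = (a*b)*c := by ring
      rw [h1]; exact hself _
    rw [h]; exact Submodule.zero_mem _
  · have h : a*(b*c) + b*(a*c) = 0 := by
      have h1 : b*(a*c) = a*(b*c) := by ring
      rw [h1]; exact hself _
    rw [h]; exact Submodule.zero_mem _

end Statement11Aux

/-- Let `F` be a field of characteristic 2 and `n ≥ 1`. The group algebra
`A = F[(ℤ/2ℤ)^n]` (with basis `{e_x}` and multiplication `e_x e_y = e_{x+y}`) is both
descendingly flexible and descendingly alternative, and `l(A) = n = log₂(dim A)`,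
with `dim A = 2^n`. Here `Lin_0 = span F {1}` since `A` is unital. -/
theorem groupAlgebra_zmod2_pow {F : Type*} [Field F] [CharP F 2] (n : ℕ) (hn : 1 ≤ n) :
    IsDescFlexible F (Submodule.span F {(1 : AddMonoidAlgebra F (Fin n → ZMod 2))}) ∧
    IsDescAlternative F (Submodule.span F {(1 : AddMonoidAlgebra F (Fin n → ZMod 2))}) ∧
    algLen F (Submodule.span F {(1 : AddMonoidAlgebra F (Fin n → ZMod 2))}) = n ∧
    Module.finrank F (AddMonoidAlgebra F (Fin n → ZMod 2)) = 2 ^ n ∧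
    n = Nat.log 2 (Module.finrank F (AddMonoidAlgebra F (Fin n → ZMod 2))) := by
  have hfin : Module.finrank F (AddMonoidAlgebra F (Fin n → ZMod 2)) = 2 ^ n := by
    have h1 : Module.finrank F ((Fin n → ZMod 2) →₀ F) = Fintype.card (Fin n → ZMod 2) :=
      Module.finrank_finsupp_self F
    have h2 : Module.finrank F (AddMonoidAlgebra F (Fin n → ZMod 2))
        = Module.finrank F ((Fin n → ZMod 2) →₀ F) :=
        (AddMonoidAlgebra.coeffLinearEquiv F).finrank_eq
    rw [h2, h1, Fintype.card_fun]
    simp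
  refine ⟨desc_flex, desc_alt, algLen_eq hn, hfin, ?_⟩
  rw [hfin, Nat.log_pow (by norm_num)]

end DescLength
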